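/- arXiv:1306.2002 — 2 statements merged into one kernel-verified Lean document; each statement's English description precedes it below -/
import Mathlib

section
/- For any enhanced finite group (G, q), the Gauss sum Σ_{x∈G} exp(πi·q(x)) has absolute value √|G|. -/
/-- The doubling map `ℚ/ℤ → ℚ/2ℤ` induced by multiplication by `2`. -/
noncomputable def dbl : AddCircle (1 : ℚ) ≃+ AddCircle (2 : ℚ) :=
  AddCircle.equivAddCircle (1 : ℚ) (2 : ℚ) one_ne_zero two_ne_zero


noncomputable def E2 : AddCircle (2 : ℚ) → ℂ := fun x =>
  Quotient.liftOn' x (fun t : ℚ => Complex.exp (Real.pi * Complex.I * (t : ℂ))) (by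
    intro a c h
    obtain ⟨k, hk⟩ := QuotientAddGroup.leftRel_apply.mp h
    have hk' : (k:ℚ) * 2 = -a + c := by rw [← hk]; simp [zsmul_eq_mul]
    have : (c : ℚ) = a + k * 2 := by linarith
    rw [this]
    push_cast
    rw [mul_add, Complex.exp_add]
    have : (Real.pi : ℂ) * Complex.I * ((k : ℂ) * 2) = (k : ℤ) * (2 * Real.pi * Complex.I) := by ring
    rw [this, Complex.exp_int_mul_two_pi_mul_I, mul_one])

theorem E2_coe (t : ℚ) : E2 (t : AddCircle (2:ℚ)) = Complex.exp (Real.pi * Complex.I * (t : ℂ)) := rfl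

noncomputable def E1 : AddCircle (1 : ℚ) → ℂ := fun x =>
  Quotient.liftOn' x (fun t : ℚ => Complex.exp (2 * Real.pi * Complex.I * (t : ℂ))) (by
    intro a c h
    obtain ⟨k, hk⟩ := QuotientAddGroup.leftRel_apply.mp h
    have hk' : (k:ℚ) * 1 = -a + c := by rw [← hk]; simp [zsmul_eq_mul]
    have : (c : ℚ) = a + k := by linarith
    rw [this]
    push_cast
    rw [mul_add, Complex.exp_add]
    have : 2 * (Real.pi : ℂ) * Complex.I * (k : ℂ) = (k : ℤ) * (2 * Real.pi * Complex.I) := by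
      push_cast; ring
    rw [this, Complex.exp_int_mul_two_pi_mul_I, mul_one])

theorem E1_coe (t : ℚ) : E1 (t : AddCircle (1:ℚ)) = Complex.exp (2 * Real.pi * Complex.I * (t : ℂ)) := rfl

theorem E2_add (a c : AddCircle (2:ℚ)) : E2 (a + c) = E2 a * E2 c := by
  induction a using QuotientAddGroup.induction_on
  induction c using QuotientAddGroup.induction_on
  rw [← QuotientAddGroup.mk_add]
  show E2 ((_ : ℚ) : AddCircle (2:ℚ)) = _
  rw [E2_coe, E2_coe, E2_coe, ← Complex.exp_add]
  push_cast
  ring_nf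

theorem E1_add (a c : AddCircle (1:ℚ)) : E1 (a + c) = E1 a * E1 c := by
  induction a using QuotientAddGroup.induction_on
  induction c using QuotientAddGroup.induction_on
  rw [← QuotientAddGroup.mk_add]
  show E1 ((_ : ℚ) : AddCircle (1:ℚ)) = _
  rw [E1_coe, E1_coe, E1_coe, ← Complex.exp_add]
  push_cast
  ring_nf

theorem E2_zero : E2 0 = 1 := by
  show E2 ((0:ℚ) : AddCircle (2:ℚ)) = 1
  rw [E2_coe]; simp

theorem E2_conj (a : AddCircle (2:ℚ)) : (starRingEnd ℂ) (E2 a) = E2 (-a) := by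
  induction a using QuotientAddGroup.induction_on with
  | H t =>
  rw [show -((t:ℚ) : AddCircle (2:ℚ)) = ((-t : ℚ) : AddCircle (2:ℚ)) from (QuotientAddGroup.mk_neg _ _).symm]
  rw [E2_coe, E2_coe, ← Complex.exp_conj]
  congr 1
  simp only [map_mul, map_ratCast, Complex.conj_I, Complex.conj_ofReal]
  push_cast
  ring

theorem E1_eq_zero {a : AddCircle (1:ℚ)} (h : E1 a = 1) : a = 0 := by
  induction a using QuotientAddGroup.induction_on with
  | H t =>
  rw [E1_coe, Complex.exp_eq_one_iff] at h
  obtain ⟨n, hn⟩ := h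
  have h2 : (2 : ℂ) * Real.pi * Complex.I ≠ 0 := by
    apply mul_ne_zero (mul_ne_zero two_ne_zero _) Complex.I_ne_zero
    exact_mod_cast Real.pi_ne_zero
  have ht : (t : ℂ) = (n : ℂ) := mul_left_cancel₀ h2 (by rw [hn]; ring)
  have ht' : t = (n : ℚ) := by exact_mod_cast ht
  rw [ht']
  exact (QuotientAddGroup.eq_zero_iff _).mpr ⟨n, by simp⟩

theorem E2_dbl (a : AddCircle (1:ℚ)) : E2 (dbl a) = E1 a := by
  induction a using QuotientAddGroup.induction_on with
  | H t =>
  rw [show dbl ((t:ℚ) : AddCircle (1:ℚ)) = ((t * ((1:ℚ)⁻¹ * 2) : ℚ) : AddCircle (2:ℚ)) from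
    AddCircle.equivAddCircle_apply_mk 1 2 one_ne_zero two_ne_zero t]
  rw [E2_coe, E1_coe]
  congr 1
  push_cast
  ring

/-- For any enhanced finite group `(G, q)` (finite abelian group with a non-degenerate
symmetric `ℚ/ℤ`-valued pairing and quadratic refinement `q` valued in `ℚ/2ℤ`), the Gauss
sum `Σ_x exp(πi·q(x))` (computed with any rational lift `qr` of `q`) has absolute value
`√|G|`. -/
theorem stmt5 {G : Type*} [AddCommGroup G] [Fintype G]
    (b : G → G → AddCircle (1 : ℚ))
    (hbil : ∀ x y z : G, b (x + y) z = b x z + b y z)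
    (hsym : ∀ x y : G, b x y = b y x)
    (hnd : ∀ x : G, (∀ y : G, b x y = 0) → x = 0)
    (q : G → AddCircle (2 : ℚ))
    (hq1 : ∀ x y : G, q (x + y) = q x + q y + dbl (b x y))
    (hq2 : ∀ (n : ℤ) (x : G), q (n • x) = n ^ 2 • q x)
    (qr : G → ℚ) (hqr : ∀ x : G, ((qr x : ℚ) : AddCircle (2 : ℚ)) = q x) :
    ‖∑ x : G, Complex.exp (Real.pi * Complex.I * (qr x : ℂ))‖ =
      Real.sqrt (Fintype.card G) := by

  classical
  -- basic facts
  have hb2 : ∀ x y z : G, b x (y + z) = b x y + b x z := fun x y z => by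
    rw [hsym, hbil, hsym y x, hsym z x]
  have hq0 : q 0 = 0 := by
    have := hq2 0 0
    simpa using this
  set S := ∑ x : G, Complex.exp (Real.pi * Complex.I * (qr x : ℂ)) with hS
  have hSE : S = ∑ x : G, E2 (q x) := by
    apply Finset.sum_congr rfl
    intro x _
    rw [← hqr x, E2_coe]
  -- the inner character sums
  have hE1zero : E1 (0 : AddCircle (1:ℚ)) = 1 := by
    show E1 ((0:ℚ) : AddCircle (1:ℚ)) = 1
    rw [E1_coe]; simp
  have hT : ∀ z : G, (∑ y : G, E1 (b z y)) = if z = 0 then (Fintype.card G : ℂ) else 0 := by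
    intro z
    by_cases hz : z = 0
    · subst hz
      have hb0 : ∀ y : G, b 0 y = 0 := by
        intro y
        have := hbil 0 0 y
        rw [add_zero] at this
        exact left_eq_add.mp this
      simp [hb0, hE1zero]
    · obtain ⟨y0, hy0⟩ := not_forall.mp (fun h => hz (hnd z h))
      have hχ : E1 (b z y0) ≠ 1 := fun h => hy0 (E1_eq_zero h)
      have hshift : (∑ y : G, E1 (b z y)) * E1 (b z y0) = ∑ y : G, E1 (b z y) := by
        rw [Finset.sum_mul]
        have : ∀ y : G, E1 (b z y) * E1 (b z y0) = E1 (b z (y + y0)) := by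
          intro y
          rw [hb2, E1_add]
        simp_rw [this]
        exact Fintype.sum_equiv (Equiv.addRight y0) _ _ (fun y => rfl)
      have : (∑ y : G, E1 (b z y)) * (E1 (b z y0) - 1) = 0 := by
        rw [mul_sub, hshift, mul_one, sub_self]
      rcases mul_eq_zero.mp this with h | h
      · simp [if_neg hz, h]
      · exact absurd (by linear_combination h) hχ
  -- compute S * conj S
  have key : S * (starRingEnd ℂ) S = (Fintype.card G : ℂ) := by
    rw [hSE, map_sum]
    simp_rw [E2_conj]
    rw [Finset.sum_mul_sum]
    have hterm : ∀ x y : G, E2 (q x) * E2 (-(q y)) = E2 (q x + -(q y)) := fun x y =>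
      (E2_add _ _).symm
    calc (∑ x : G, ∑ y : G, E2 (q x) * E2 (-(q y)))
        = ∑ y : G, ∑ x : G, E2 (q x + -(q y)) := by
          rw [Finset.sum_comm]
          exact Finset.sum_congr rfl fun y _ => Finset.sum_congr rfl fun x _ => hterm x y
      _ = ∑ y : G, ∑ z : G, E2 (q z) * E1 (b z y) := by
          refine Finset.sum_congr rfl fun y _ => ?_
          refine (Fintype.sum_equiv (Equiv.addRight y) _ _ fun z => ?_).symm
          show E2 (q z) * E1 (b z y) = E2 (q (z + y) + -(q y))
          rw [hq1, show q z + q y + dbl (b z y) + -(q y) = q z + dbl (b z y) by abel,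
            E2_add, E2_dbl]
      _ = ∑ z : G, E2 (q z) * ∑ y : G, E1 (b z y) := by
          rw [Finset.sum_comm]
          exact Finset.sum_congr rfl fun z _ => (Finset.mul_sum _ _ _).symm
      _ = (Fintype.card G : ℂ) := by
          simp_rw [hT]
          rw [Fintype.sum_eq_single 0 (by intro z hz; simp [if_neg hz])]
          rw [if_pos rfl, hq0, E2_zero, one_mul]
  -- conclude
  have habs : Complex.normSq S = (Fintype.card G : ℝ) := by
    have := Complex.mul_conj S
    rw [key] at this
    exact_mod_cast this.symm
  rw [Complex.norm_def, habs]
end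

section
/- Let G be an elementary enhanced 2-group (all nonzero elements of order 2, with odd quadratic refinement) that is not isomorphic to n⟨1/2⟩ for n ≤ 3. Then there exists v ∈ G with q(v) = −1/2 in Q/2Z. If moreover G ≠ ⟨−1/2⟩, such v can be chosen non-characteristic. -/
/-- The natural reduction map `ℚ/2ℤ → ℚ/ℤ`. -/
def redmap : AddCircle (2 : ℚ) →+ AddCircle (1 : ℚ) :=
  QuotientAddGroup.map (AddSubgroup.zmultiples (2 : ℚ)) (AddSubgroup.zmultiples (1 : ℚ))
    (AddMonoidHom.id ℚ) (by
      intro x hx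
      obtain ⟨k, hk⟩ := AddSubgroup.mem_zmultiples_iff.mp hx
      rw [AddSubgroup.mem_comap]
      refine AddSubgroup.mem_zmultiples_iff.mpr ⟨2 * k, ?_⟩
      simp only [AddMonoidHom.id_apply]
      rw [← hk]
      simp [zsmul_eq_mul]
      ring)

lemma ac2_eq {a c : ℚ} (k : ℤ) (h : a = c + 2*k) :
    ((a:ℚ) : AddCircle (2:ℚ)) = ((c:ℚ) : AddCircle (2:ℚ)) := by
  subst h
  rw [AddCircle.coe_add, add_eq_left, AddCircle.coe_eq_zero_iff]
  exact ⟨k, by push_cast [zsmul_eq_mul]; ring⟩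

lemma ac2_iff {a c : ℚ} :
    ((a:ℚ) : AddCircle (2:ℚ)) = ((c:ℚ) : AddCircle (2:ℚ)) ↔ ∃ k : ℤ, a = c + 2*k := by
  constructor
  · intro h
    have h' : (↑(a - c) : AddCircle (2:ℚ)) = 0 := by rw [AddCircle.coe_sub, h, sub_self]
    rw [AddCircle.coe_eq_zero_iff] at h'
    obtain ⟨n, hn⟩ := h'
    rw [zsmul_eq_mul] at hn
    exact ⟨n, by linarith⟩
  · rintro ⟨k, h⟩; exact ac2_eq k h

lemma ac1_eq {a c : ℚ} (k : ℤ) (h : a = c + k) :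
    ((a:ℚ) : AddCircle (1:ℚ)) = ((c:ℚ) : AddCircle (1:ℚ)) := by
  subst h
  rw [AddCircle.coe_add, add_eq_left, AddCircle.coe_eq_zero_iff]
  exact ⟨k, by push_cast [zsmul_eq_mul]; ring⟩

lemma ac1_iff {a c : ℚ} :
    ((a:ℚ) : AddCircle (1:ℚ)) = ((c:ℚ) : AddCircle (1:ℚ)) ↔ ∃ k : ℤ, a = c + k := by
  constructor
  · intro h
    have h' : (↑(a - c) : AddCircle (1:ℚ)) = 0 := by rw [AddCircle.coe_sub, h, sub_self]
    rw [AddCircle.coe_eq_zero_iff] at h'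
    obtain ⟨n, hn⟩ := h'
    rw [zsmul_eq_mul] at hn
    exact ⟨n, by linarith⟩
  · rintro ⟨k, h⟩; exact ac1_eq k h

lemma ac2_zero : ((0:ℚ) : AddCircle (2:ℚ)) = 0 := rfl
lemma ac1_zero : ((0:ℚ) : AddCircle (1:ℚ)) = 0 := rfl

lemma ac2_ne {a c : ℚ} (num : ∀ k : ℤ, a ≠ c + 2*k) :
    ((a:ℚ) : AddCircle (2:ℚ)) ≠ ((c:ℚ) : AddCircle (2:ℚ)) := by
  intro h; obtain ⟨k, hk⟩ := ac2_iff.mp h; exact num k hk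

-- specific values
lemma half2_ne_zero : ((1/2:ℚ) : AddCircle (2:ℚ)) ≠ (0 : AddCircle (2:ℚ)) := by
  intro hh
  obtain ⟨k, h⟩ := ac2_iff.mp (hh.trans ac2_zero.symm)
  have : ((4*k:ℤ):ℚ) = 1 := by push_cast; linarith
  have : (4*k:ℤ) = 1 := by exact_mod_cast this
  omega

lemma one2_ne_zero : ((1:ℚ) : AddCircle (2:ℚ)) ≠ (0 : AddCircle (2:ℚ)) := by
  intro hh
  obtain ⟨k, h⟩ := ac2_iff.mp (hh.trans ac2_zero.symm)
  have : ((2*k:ℤ):ℚ) = 1 := by push_cast; linarith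
  have : (2*k:ℤ) = 1 := by exact_mod_cast this
  omega

lemma th2_ne_zero : ((3/2:ℚ) : AddCircle (2:ℚ)) ≠ (0 : AddCircle (2:ℚ)) := by
  intro hh
  obtain ⟨k, h⟩ := ac2_iff.mp (hh.trans ac2_zero.symm)
  have : ((4*k:ℤ):ℚ) = 3 := by push_cast; linarith
  have : (4*k:ℤ) = 3 := by exact_mod_cast this
  omega

lemma th2_ne_half : ((3/2:ℚ) : AddCircle (2:ℚ)) ≠ ((1/2:ℚ) : AddCircle (2:ℚ)) := by
  refine ac2_ne (fun k h => ?_)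
  have : ((2*k:ℤ):ℚ) = 1 := by push_cast; linarith
  have : (2*k:ℤ) = 1 := by exact_mod_cast this
  omega

lemma th2_ne_one : ((3/2:ℚ) : AddCircle (2:ℚ)) ≠ ((1:ℚ) : AddCircle (2:ℚ)) := by
  refine ac2_ne (fun k h => ?_)
  have : ((4*k:ℤ):ℚ) = 1 := by push_cast; linarith
  have : (4*k:ℤ) = 1 := by exact_mod_cast this
  omega

lemma half2_ne_one : ((1/2:ℚ) : AddCircle (2:ℚ)) ≠ ((1:ℚ) : AddCircle (2:ℚ)) := by
  refine ac2_ne (fun k h => ?_)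
  have : ((4*k:ℤ):ℚ) = -1 := by push_cast; linarith
  have : (4*k:ℤ) = -1 := by exact_mod_cast this
  omega

lemma half1_ne_zero : ((1/2:ℚ) : AddCircle (1:ℚ)) ≠ (0 : AddCircle (1:ℚ)) := by
  intro h
  obtain ⟨k, hk⟩ := ac1_iff.mp (h.trans ac1_zero.symm)
  have : ((2*k:ℤ):ℚ) = 1 := by push_cast; linarith
  have : (2*k:ℤ) = 1 := by exact_mod_cast this
  omega

lemma one1_eq_zero : ((1:ℚ) : AddCircle (1:ℚ)) = (0 : AddCircle (1:ℚ)) := ac1_eq 1 (by norm_num)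
lemma th1_eq_half : ((3/2:ℚ) : AddCircle (1:ℚ)) = ((1/2:ℚ) : AddCircle (1:ℚ)) := ac1_eq 1 (by norm_num)
lemma neg_half2 : ((-(1/2):ℚ) : AddCircle (2:ℚ)) = ((3/2:ℚ) : AddCircle (2:ℚ)) := ac2_eq (-1) (by norm_num)

lemma dbl_coe (a : ℚ) : dbl ((a:ℚ) : AddCircle (1:ℚ)) = ((2*a : ℚ) : AddCircle (2:ℚ)) := by
  simp [dbl, AddCircle.equivAddCircle_apply_mk]
  ring_nf

lemma two_torsion1 (t : AddCircle (1:ℚ)) (h : t + t = 0) :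
    t = ((0:ℚ) : AddCircle (1:ℚ)) ∨ t = ((1/2 : ℚ) : AddCircle (1:ℚ)) := by
  obtain ⟨r, rfl⟩ := QuotientAddGroup.mk_surjective t
  rw [show ((0:AddCircle (1:ℚ))) = ((0:ℚ) : AddCircle (1:ℚ)) from rfl, ← AddCircle.coe_add,
    ac1_iff] at h
  obtain ⟨k, hk⟩ := h
  rcases Int.even_or_odd k with ⟨m, hm⟩ | ⟨m, hm⟩
  · exact Or.inl (ac1_eq m (by subst hm; push_cast at hk ⊢; linarith))
  · exact Or.inr (ac1_eq m (by subst hm; push_cast at hk ⊢; linarith))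

lemma four_torsion2 (t : AddCircle (2:ℚ)) (h : t + t + (t + t) = 0) :
    t = ((0:ℚ) : AddCircle (2:ℚ)) ∨ t = ((1/2 : ℚ) : AddCircle (2:ℚ)) ∨
    t = ((1 : ℚ) : AddCircle (2:ℚ)) ∨ t = ((3/2 : ℚ) : AddCircle (2:ℚ)) := by
  obtain ⟨r, rfl⟩ := QuotientAddGroup.mk_surjective t
  have h' : ((r+r+(r+r) : ℚ) : AddCircle (2:ℚ)) = ((0:ℚ) : AddCircle (2:ℚ)) := by
    exact_mod_cast h
  obtain ⟨k, hk⟩ := ac2_iff.mp h'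
  have hr : (r:ℚ) = k/2 := by linarith
  have h4 : k % 4 = 0 ∨ k % 4 = 1 ∨ k % 4 = 2 ∨ k % 4 = 3 := by omega
  have hk2 : (k:ℚ) = (k % 4 : ℤ) + 4 * (k / 4 : ℤ) := by push_cast [Int.emod_def]; ring
  rcases h4 with h4 | h4 | h4 | h4
  · exact Or.inl (ac2_eq (k/4) (by rw [hr, hk2, h4]; push_cast; ring))
  · exact Or.inr (Or.inl (ac2_eq (k/4) (by rw [hr, hk2, h4]; push_cast; ring)))
  · exact Or.inr (Or.inr (Or.inl (ac2_eq (k/4) (by rw [hr, hk2, h4]; push_cast; ring))))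
  · exact Or.inr (Or.inr (Or.inr (ac2_eq (k/4) (by rw [hr, hk2, h4]; push_cast; ring))))

lemma csum2 (r s : ℚ) : ((r:ℚ) : AddCircle (2:ℚ)) + ((s:ℚ) : AddCircle (2:ℚ)) = ((r+s:ℚ) : AddCircle (2:ℚ)) :=
  (AddCircle.coe_add (p := (2:ℚ)) r s).symm
lemma csum1 (r s : ℚ) : ((r:ℚ) : AddCircle (1:ℚ)) + ((s:ℚ) : AddCircle (1:ℚ)) = ((r+s:ℚ) : AddCircle (1:ℚ)) :=
  (AddCircle.coe_add (p := (1:ℚ)) r s).symm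

lemma zmod2_cases (u : ZMod 2) : u = 0 ∨ u = 1 := by fin_cases u <;> [exact Or.inl rfl; exact Or.inr rfl]

lemma buildIso {G : Type*} [AddCommGroup G]
    (h2 : ∀ x : G, x + x = 0)
    (b : G → G → AddCircle (1 : ℚ))
    (hbil : ∀ x y z : G, b (x + y) z = b x z + b y z)
    (hsym : ∀ x y : G, b x y = b y x)
    (q : G → AddCircle (2 : ℚ))
    (hq1 : ∀ x y : G, q (x + y) = q x + q y + dbl (b x y))
    (hq0 : q 0 = 0)
    {n : ℕ} (a : Fin n → G)
    (horth : ∀ i j, i ≠ j → b (a i) (a j) = 0)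
    (hqa : ∀ i, q (a i) = ((1/2 : ℚ) : AddCircle (2:ℚ)))
    (hspan : ∀ x : G, (∀ i, b (a i) x = 0) → x = 0) :
    ∃ e : G ≃+ (Fin n → ZMod 2),
      ∀ x : G, q x = (((∑ i, if e x i = 0 then (0:ℚ) else 1/2) : ℚ) : AddCircle (2:ℚ)) := by
  have hb0 : ∀ y : G, b 0 y = 0 := by
    intro y
    have h := hbil 0 0 y
    rw [add_zero] at h
    exact (right_eq_add.mp h)
  have hbadd : ∀ x y z : G, b x (y + z) = b x y + b x z := by
    intro x y z; rw [hsym, hbil, hsym y x, hsym z x]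
  have hb0' : ∀ y : G, b y 0 = 0 := fun y => by rw [hsym]; exact hb0 y
  have hbt : ∀ x y : G, b x y = ((0:ℚ) : AddCircle (1:ℚ)) ∨ b x y = ((1/2:ℚ) : AddCircle (1:ℚ)) := by
    intro x y
    refine two_torsion1 _ ?_
    rw [← hbil, h2, hb0]
  have hdiag : ∀ i, b (a i) (a i) = ((1/2:ℚ) : AddCircle (1:ℚ)) := by
    intro i
    rcases hbt (a i) (a i) with h | h
    · exfalso
      have hh := hq1 (a i) (a i)
      rw [h2, hq0, hqa, h, dbl_coe, csum2, csum2] at hh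
      norm_num at hh
      exact one2_ne_zero hh.symm
    · exact h
  -- the coordinate map
  set f : G → (Fin n → ZMod 2) := fun x i => if b (a i) x = 0 then 0 else 1 with hf
  have hfadd : ∀ x y : G, f (x + y) = f x + f y := by
    intro x y
    funext i
    simp only [hf, Pi.add_apply]
    rcases hbt (a i) x with hx | hx <;> rcases hbt (a i) y with hy | hy
    · have hxy : b (a i) (x + y) = (0 : AddCircle (1:ℚ)) := by
        rw [hbadd, hx, hy, csum1, show ((0:ℚ)+0 = (0:ℚ)) by norm_num]
        exact ac1_zero
      rw [if_pos hxy, if_pos (hx.trans ac1_zero), if_pos (hy.trans ac1_zero)]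
      decide
    · have hxy : b (a i) (x + y) = ((1/2:ℚ) : AddCircle (1:ℚ)) := by
        rw [hbadd, hx, hy, csum1]
        exact congrArg _ (by norm_num)
      rw [if_neg (fun h => half1_ne_zero (hxy.symm.trans h)),
        if_pos (hx.trans ac1_zero), if_neg (fun h => half1_ne_zero (hy.symm.trans h))]
      decide
    · have hxy : b (a i) (x + y) = ((1/2:ℚ) : AddCircle (1:ℚ)) := by
        rw [hbadd, hx, hy, csum1]
        exact congrArg _ (by norm_num)
      rw [if_neg (fun h => half1_ne_zero (hxy.symm.trans h)),
        if_neg (fun h => half1_ne_zero (hx.symm.trans h)), if_pos (hy.trans ac1_zero)]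
      decide
    · have hxy : b (a i) (x + y) = (0 : AddCircle (1:ℚ)) := by
        rw [hbadd, hx, hy, csum1, show ((1/2:ℚ)+1/2 = (1:ℚ)) by norm_num]
        exact one1_eq_zero
      rw [if_pos hxy, if_neg (fun h => half1_ne_zero (hx.symm.trans h)),
        if_neg (fun h => half1_ne_zero (hy.symm.trans h))]
      decide
  set F : G →+ (Fin n → ZMod 2) := AddMonoidHom.mk' f hfadd with hF
  have hFapp : ∀ x, F x = f x := fun x => rfl
  have hfzero : ∀ x, (∀ i, f x i = 0) → x = 0 := by
    intro x hx
    refine hspan x fun i => ?_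
    by_contra hne
    have := hx i
    rw [hf] at this
    simp only [if_neg hne] at this
    exact one_ne_zero this
  have hinj : Function.Injective F := by
    intro x y h
    have hxy : x + y = 0 := by
      refine hfzero _ fun i => ?_
      have hxyi : f (x + y) i = f x i + f y i := by rw [hfadd]; rfl
      have h' : f x i = f y i := congrFun h i
      rw [hxyi, h']
      rcases zmod2_cases (f y i) with h'' | h'' <;> rw [h''] <;> decide
    calc x = x + (y + y) := by rw [h2, add_zero]
    _ = (x + y) + y := (add_assoc x y y).symm
    _ = y := by rw [hxy, zero_add]
  have hFa : ∀ i, F (a i) = Pi.single i 1 := by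
    intro i
    funext j
    rw [hFapp]
    by_cases hji : j = i
    · subst hji
      simp only [hf, hdiag j]
      rw [Pi.single_eq_same, if_neg half1_ne_zero]
    · simp [hf, horth j i hji, Pi.single_eq_of_ne hji]

  have hsurj : Function.Surjective F := by
    intro t
    refine ⟨∑ i, (if t i = 0 then 0 else a i), ?_⟩
    rw [map_sum]
    have : ∀ i ∈ Finset.univ, F (if t i = 0 then 0 else a i) = Pi.single i (t i) := by
      intro i _
      rcases zmod2_cases (t i) with h | h <;> rw [h]
      · rw [if_pos rfl, map_zero, Pi.single_zero]
      · rw [if_neg one_ne_zero, hFa]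
    rw [Finset.sum_congr rfl this, Finset.univ_sum_single]
  set e := AddEquiv.ofBijective F ⟨hinj, hsurj⟩ with he
  have heapp : ∀ x, e x = f x := fun x => rfl
  refine ⟨e, ?_⟩
  -- q of a sum of basis vectors
  have hbsum : ∀ (x : G) (S : Finset (Fin n)), b x (∑ i ∈ S, a i) = ∑ i ∈ S, b x (a i) := by
    intro x S
    induction S using Finset.cons_induction with
    | empty => simp [hb0']
    | cons i S hi ih => rw [Finset.sum_cons, Finset.sum_cons, hbadd, ih]
  have qsum : ∀ S : Finset (Fin n), q (∑ i ∈ S, a i) = (((S.card : ℚ)/2 : ℚ) : AddCircle (2:ℚ)) := by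
    intro S
    induction S using Finset.cons_induction with
    | empty => simpa using hq0
    | cons i S hi ih =>
      rw [Finset.sum_cons, hq1, hqa, ih, hbsum]
      rw [Finset.sum_eq_zero (fun j hj => horth i j (fun h => hi (h ▸ hj)))]
      rw [show ((0 : AddCircle (1:ℚ))) = ((0:ℚ) : AddCircle (1:ℚ)) from rfl, dbl_coe, csum2, csum2,
        Finset.card_cons]
      exact congrArg _ (by push_cast; ring)
  intro x
  set T : Finset (Fin n) := Finset.univ.filter (fun i => f x i ≠ 0) with hT
  have hx : x = ∑ i ∈ T, a i := by
    apply hinj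
    rw [map_sum, Finset.sum_congr rfl (fun i _ => hFa i)]
    funext j
    rw [hFapp, Finset.sum_apply]
    have key : (∑ i ∈ T, Pi.single i (1 : ZMod 2) j) = if j ∈ T then 1 else 0 := by
      simp [Pi.single_apply, Finset.sum_ite_eq]
    rw [key]
    by_cases hj : f x j = 0
    · rw [if_neg (by simp [hT, hj])]
      exact hj
    · rw [if_pos (by simp [hT, hj])]
      rcases zmod2_cases (f x j) with h | h
      · exact absurd h hj
      · exact h
  have hrhs : (∑ i, if e x i = 0 then (0:ℚ) else 1/2) = (T.card : ℚ) * (1/2) := by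
    have step1 : (∑ i, if e x i = 0 then (0:ℚ) else 1/2)
        = ∑ i, (if f x i ≠ 0 then (1/2:ℚ) else 0) := by
      refine Finset.sum_congr rfl (fun i _ => ?_)
      rw [heapp]
      by_cases h : f x i = 0 <;> simp [h]
    rw [step1, ← Finset.sum_filter, ← hT, Finset.sum_const, nsmul_eq_mul]
  rw [hrhs]
  conv_lhs => rw [hx]
  rw [qsum]
  exact congrArg _ (by ring)

lemma redmap_coe (r : ℚ) : redmap ((r:ℚ) : AddCircle (2:ℚ)) = ((r:ℚ) : AddCircle (1:ℚ)) := rfl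


/-- Let `(G, q)` be an elementary enhanced 2-group with odd quadratic refinement which
is not isomorphic to `n⟨1/2⟩` for `n ≤ 3`.  Then there is `v ∈ G` with `q(v) = -1/2`;
if moreover `G ≠ ⟨-1/2⟩`, such a `v` can be chosen non-characteristic. -/
theorem stmt16 {G : Type*} [AddCommGroup G] [Fintype G]
    (h2 : ∀ x : G, x + x = 0)
    (b : G → G → AddCircle (1 : ℚ))
    (hbil : ∀ x y z : G, b (x + y) z = b x z + b y z)
    (hsym : ∀ x y : G, b x y = b y x)
    (hnd : ∀ x : G, (∀ y : G, b x y = 0) → x = 0)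
    (q : G → AddCircle (2 : ℚ))
    (hq1 : ∀ x y : G, q (x + y) = q x + q y + dbl (b x y))
    (hq2 : ∀ (n : ℤ) (x : G), q (n • x) = n ^ 2 • q x)
    (hodd : ∃ x : G, ¬ ∃ k : ℤ, q x = ((k : ℚ) : AddCircle (2 : ℚ)))
    (hnotstd : ¬ ∃ n : ℕ, n ≤ 3 ∧ ∃ e : G ≃+ (Fin n → ZMod 2),
      ∀ x : G, q x = (((∑ i, if e x i = 0 then (0 : ℚ) else 1 / 2) : ℚ) : AddCircle (2 : ℚ))) :
    (∃ v : G, q v = ((-(1 / 2) : ℚ) : AddCircle (2 : ℚ))) ∧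
    ((¬ ∃ e : G ≃+ ZMod 2,
        ∀ x : G, q x = (((if e x = 0 then (0 : ℚ) else -(1 / 2)) : ℚ) : AddCircle (2 : ℚ))) →
      ∃ v : G, q v = ((-(1 / 2) : ℚ) : AddCircle (2 : ℚ)) ∧
        ¬ (∀ x : G, b v x = redmap (q x))) := by
  -- basic facts
  have hq0 : q 0 = 0 := by have h := hq2 0 0; simpa using h
  have hb0 : ∀ y : G, b 0 y = 0 := by
    intro y
    have h := hbil 0 0 y
    rw [add_zero] at h
    exact (right_eq_add.mp h)
  have hbadd : ∀ x y z : G, b x (y + z) = b x y + b x z := by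
    intro x y z; rw [hsym, hbil, hsym y x, hsym z x]
  have hb0' : ∀ y : G, b y 0 = 0 := fun y => by rw [hsym]; exact hb0 y
  have hbt : ∀ x y : G, b x y = ((0:ℚ) : AddCircle (1:ℚ)) ∨ b x y = ((1/2:ℚ) : AddCircle (1:ℚ)) := by
    intro x y
    refine two_torsion1 _ ?_
    rw [← hbil, h2, hb0]
  have hqq : ∀ x : G, (0 : AddCircle (2:ℚ)) = q x + q x + dbl (b x x) := by
    intro x
    have h := hq1 x x
    rwa [h2 x, hq0] at h
  have hq4 : ∀ x : G, q x = ((0:ℚ) : AddCircle (2:ℚ)) ∨ q x = ((1/2:ℚ) : AddCircle (2:ℚ)) ∨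
      q x = ((1:ℚ) : AddCircle (2:ℚ)) ∨ q x = ((3/2:ℚ) : AddCircle (2:ℚ)) := by
    intro x
    refine four_torsion2 _ ?_
    have h1 : q x + q x = -dbl (b x x) := by
      have h0 : (q x + q x) + dbl (b x x) = 0 := (hqq x).symm
      exact add_eq_zero_iff_eq_neg.mp h0
    have h2' : dbl (b x x) + dbl (b x x) = 0 := by
      rw [← map_add, ← hbil, h2, hb0, map_zero]
    rw [h1]
    calc -dbl (b x x) + -dbl (b x x) = -(dbl (b x x) + dbl (b x x)) := (neg_add _ _).symm
      _ = 0 := by rw [h2', neg_zero]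
  have hbxx : ∀ x : G, (q x = ((1/2:ℚ) : AddCircle (2:ℚ)) ∨ q x = ((3/2:ℚ) : AddCircle (2:ℚ))) →
      b x x = ((1/2:ℚ) : AddCircle (1:ℚ)) := by
    intro x hx
    rcases hbt x x with h | h
    · exfalso
      have h0 := hqq x
      rw [h, dbl_coe] at h0
      have h3 : ((3:ℚ) : AddCircle (2:ℚ)) = ((1:ℚ) : AddCircle (2:ℚ)) := ac2_eq 1 (by norm_num)
      rcases hx with hx | hx <;> rw [hx, csum2, csum2] at h0 <;> norm_num at h0
      · exact one2_ne_zero h0.symm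
      · rw [h3] at h0
        exact one2_ne_zero h0.symm
    · exact h
  have hbxx0 : ∀ x : G, (q x = ((0:ℚ) : AddCircle (2:ℚ)) ∨ q x = ((1:ℚ) : AddCircle (2:ℚ))) →
      b x x = 0 := by
    intro x hx
    rcases hbt x x with h | h
    · exact h.trans ac1_zero
    · exfalso
      have h0 := hqq x
      rw [h, dbl_coe] at h0
      have h3 : ((3:ℚ) : AddCircle (2:ℚ)) = ((1:ℚ) : AddCircle (2:ℚ)) := ac2_eq 1 (by norm_num)
      rcases hx with hx | hx <;> rw [hx, csum2, csum2] at h0 <;> norm_num at h0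
      · exact one2_ne_zero h0.symm
      · rw [h3] at h0
        exact one2_ne_zero h0.symm
  obtain ⟨x₀, hx₀⟩ := hodd
  have hx₀' : q x₀ = ((1/2:ℚ) : AddCircle (2:ℚ)) ∨ q x₀ = ((3/2:ℚ) : AddCircle (2:ℚ)) := by
    rcases hq4 x₀ with h|h|h|h
    · exact absurd ⟨0, by rw [h]; exact congrArg _ (by norm_num)⟩ hx₀
    · exact Or.inl h
    · exact absurd ⟨1, by rw [h]; exact congrArg _ (by norm_num)⟩ hx₀
    · exact Or.inr h
  -- Part 1 : some element with q = 3/2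
  have hP : ∃ v : G, q v = ((3/2:ℚ) : AddCircle (2:ℚ)) := by
    by_contra hno
    push_neg at hno
    have hx₁ : ∃ x₁ : G, q x₁ = ((1/2:ℚ) : AddCircle (2:ℚ)) := by
      rcases hx₀' with h|h
      · exact ⟨x₀, h⟩
      · exact absurd h (hno x₀)
    obtain ⟨x₁, hx1⟩ := hx₁
    have hbx1 : b x₁ x₁ = ((1/2:ℚ) : AddCircle (1:ℚ)) := hbxx x₁ (Or.inl hx1)
    have hH1a : ∀ y : G, b x₁ y = 0 → q y ≠ ((1:ℚ) : AddCircle (2:ℚ)) := by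
      intro y hy h1
      have hq' := hq1 x₁ y
      rw [hx1, h1, hy, map_zero, add_zero, csum2] at hq'
      exact hno _ (hq'.trans (congrArg _ (by norm_num)))
    have hH1 : ∀ y : G, b x₁ y = 0 → y ≠ 0 → q y = ((1/2:ℚ) : AddCircle (2:ℚ)) := by
      intro y hy hy0
      rcases hq4 y with h|h|h|h
      · exfalso
        have hzex : ∃ z : G, b y z ≠ 0 := by
          by_contra hz; push_neg at hz; exact hy0 (hnd y hz)
        obtain ⟨z₀, hz₀⟩ := hzex
        have hz₀' : b y z₀ = ((1/2:ℚ) : AddCircle (1:ℚ)) :=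
          (hbt y z₀).resolve_left (fun hh => hz₀ (hh.trans ac1_zero))
        obtain ⟨z, hzH, hzy⟩ : ∃ z : G, b x₁ z = 0 ∧ b y z = ((1/2:ℚ) : AddCircle (1:ℚ)) := by
          rcases hbt x₁ z₀ with h0 | h0
          · exact ⟨z₀, h0.trans ac1_zero, hz₀'⟩
          · refine ⟨z₀ + x₁, ?_, ?_⟩
            · rw [hbadd, h0, hbx1, csum1, show ((1/2:ℚ)+1/2 = (1:ℚ)) by norm_num]
              exact one1_eq_zero
            · rw [hbadd, hz₀', hsym y x₁, hy, add_zero]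
        have hqz : q z = ((0:ℚ) : AddCircle (2:ℚ)) ∨ q z = ((1/2:ℚ) : AddCircle (2:ℚ)) := by
          rcases hq4 z with h'|h'|h'|h'
          · exact Or.inl h'
          · exact Or.inr h'
          · exact absurd h' (hH1a z hzH)
          · exact absurd h' (hno z)
        have hyzH : b x₁ (y + z) = 0 := by rw [hbadd, hy, hzH, add_zero]
        have hqyz := hq1 y z
        rw [h, hzy, dbl_coe] at hqyz
        rcases hqz with h'|h' <;> rw [h'] at hqyz
        · exact hH1a (y+z) hyzH (by rw [hqyz, csum2, csum2]; exact congrArg _ (by norm_num))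
        · exact hno (y+z) (by rw [hqyz, csum2, csum2]; exact congrArg _ (by norm_num))
      · exact h
      · exact absurd h (hH1a y hy)
      · exact absurd h (hno y)
    have hH2 : ∀ y z : G, b x₁ y = 0 → b x₁ z = 0 → y ≠ 0 → z ≠ 0 → y = z := by
      intro y z hy hz hy0 hz0
      by_contra hne
      have hyz0 : y + z ≠ 0 := by
        intro hh
        apply hne
        calc y = y + (z + z) := by rw [h2, add_zero]
          _ = (y + z) + z := (add_assoc _ _ _).symm
          _ = z := by rw [hh, zero_add]
      have hyzH : b x₁ (y + z) = 0 := by rw [hbadd, hy, hz, add_zero]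
      have hq12 := hH1 _ hyzH hyz0
      have hqy := hH1 y hy hy0
      have hqz := hH1 z hz hz0
      have hqyz := hq1 y z
      rw [hqy, hqz, hq12] at hqyz
      rcases hbt y z with h'|h' <;> rw [h', dbl_coe] at hqyz <;> rw [csum2, csum2] at hqyz
      · exact half2_ne_one (hqyz.trans (congrArg _ (by norm_num)))
      · exact half2_ne_zero ((hqyz.trans (ac2_eq 1 (by norm_num))).trans ac2_zero)
    by_cases hcase : ∀ y : G, b x₁ y = 0 → y = 0
    · obtain ⟨e, he⟩ := buildIso h2 b hbil hsym q hq1 hq0 ![x₁]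
        (fun i j hij => absurd (Subsingleton.elim i j) hij)
        (fun i => by
          have : i = 0 := Subsingleton.elim i 0
          rw [this]
          exact hx1)
        (fun x hx => hcase x (hx 0))
      exact hnotstd ⟨1, by norm_num, e, he⟩
    · push_neg at hcase
      obtain ⟨y₀, hy₀H, hy₀0⟩ := hcase
      have hqy₀ := hH1 y₀ hy₀H hy₀0
      obtain ⟨e, he⟩ := buildIso h2 b hbil hsym q hq1 hq0 ![x₁, y₀]
        (by
          intro i j hij
          fin_cases i <;> fin_cases j
          · exact absurd rfl hij
          · exact hy₀H
          · show b y₀ x₁ = 0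
            rw [hsym]; exact hy₀H
          · exact absurd rfl hij)
        (by
          intro i
          fin_cases i
          · exact hx1
          · exact hqy₀)
        (by
          intro x hx
          by_contra hx0
          have h1 := hx 0
          have h2' := hx 1
          have hxy : x = y₀ := hH2 x y₀ h1 hy₀H hx0 hy₀0
          rw [hxy] at h2'
          exact half1_ne_zero ((hbxx y₀ (Or.inl hqy₀)).symm.trans h2'))
      exact hnotstd ⟨2, by norm_num, e, he⟩
  obtain ⟨v, hv⟩ := hP
  refine ⟨⟨v, by rw [neg_half2]; exact hv⟩, ?_⟩
  -- Part 2
  intro hne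
  by_contra hcon
  push_neg at hcon
  have hchar : ∀ w : G, q w = ((3/2:ℚ) : AddCircle (2:ℚ)) → ∀ x, b w x = redmap (q x) :=
    fun w hw => hcon w (by rw [neg_half2]; exact hw)
  have hcv := hchar v hv
  have hred : ∀ x : G, redmap (q x) = 0 ∨ redmap (q x) = ((1/2:ℚ) : AddCircle (1:ℚ)) := by
    intro x
    rcases hq4 x with h|h|h|h <;> rw [h, redmap_coe]
    · exact Or.inl ac1_zero
    · exact Or.inr rfl
    · exact Or.inl one1_eq_zero
    · exact Or.inr th1_eq_half
  have huniq : ∀ w : G, q w = ((3/2:ℚ) : AddCircle (2:ℚ)) → w = v := by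
    intro w hw
    have hcw := hchar w hw
    have hall : ∀ x, b (w + v) x = 0 := by
      intro x
      rw [hbil, hcw x, hcv x]
      rcases hred x with h|h <;> rw [h]
      · exact add_zero 0
      · rw [csum1, show ((1/2:ℚ)+1/2 = (1:ℚ)) by norm_num]
        exact one1_eq_zero
    have hw0 := hnd _ hall
    calc w = w + (v + v) := by rw [h2, add_zero]
      _ = (w + v) + v := (add_assoc _ _ _).symm
      _ = v := by rw [hw0, zero_add]
  have hK0 : ∀ y : G, q y = ((0:ℚ) : AddCircle (2:ℚ)) → y = 0 := by
    intro y hy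
    have hby : b v y = 0 := by rw [hcv y, hy, redmap_coe]; exact ac1_zero
    have hq' := hq1 v y
    rw [hv, hy, hby, map_zero, add_zero, csum2] at hq'
    have hvy := huniq _ (hq'.trans (congrArg _ (by norm_num)))
    exact add_left_cancel (hvy.trans (add_zero v).symm)
  have hbvv : b v v = ((1/2:ℚ) : AddCircle (1:ℚ)) := hbxx v (Or.inr hv)
  have hKval : ∀ y : G, b v y = 0 → y ≠ 0 → q y = ((1:ℚ) : AddCircle (2:ℚ)) := by
    intro y hby hy0
    rcases hq4 y with h|h|h|h
    · exact absurd (hK0 y h) hy0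
    · exfalso
      have hh := hcv y
      rw [h, redmap_coe] at hh
      exact half1_ne_zero (hh.symm.trans hby)
    · exact h
    · exfalso
      have hyv := huniq y h
      rw [hyv] at hby
      exact half1_ne_zero (hbvv.symm.trans hby)
  have hKb : ∀ y z : G, b v y = 0 → b v z = 0 → y ≠ 0 → z ≠ 0 → y ≠ z →
      b y z = ((1/2:ℚ) : AddCircle (1:ℚ)) := by
    intro y z h1 h2' hy0 hz0 hyz
    rcases hbt y z with h'|h'
    · exfalso
      have hyz0 : y + z ≠ 0 := by
        intro hh
        apply hyz
        calc y = y + (z + z) := by rw [h2, add_zero]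
          _ = (y + z) + z := (add_assoc _ _ _).symm
          _ = z := by rw [hh, zero_add]
      have hKyz : b v (y + z) = 0 := by rw [hbadd, h1, h2', add_zero]
      have hq12 := hKval _ hKyz hyz0
      have hqy := hKval y h1 hy0
      have hqz := hKval z h2' hz0
      have hqyz := hq1 y z
      rw [hqy, hqz, hq12, h'] at hqyz
      rw [show dbl (((0:ℚ) : AddCircle (1:ℚ))) = ((0:ℚ) : AddCircle (2:ℚ)) by
        rw [dbl_coe]; exact congrArg _ (by norm_num)] at hqyz
      rw [csum2, csum2] at hqyz
      exact one2_ne_zero ((hqyz.trans (ac2_eq 1 (by norm_num))).trans ac2_zero)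
    · exact h'
  by_cases hKcase : ∀ y : G, b v y = 0 → y = 0
  · -- G = {0, v} : contradict hne
    have hGel : ∀ x : G, x = 0 ∨ x = v := by
      intro x
      by_cases hx0 : x = 0
      · exact Or.inl hx0
      rcases hq4 x with h|h|h|h
      · exact Or.inl (hK0 x h)
      · have hbvx : b v x = ((1/2:ℚ) : AddCircle (1:ℚ)) := by rw [hcv x, h, redmap_coe]
        have hvvx : b v (v + x) = 0 := by
          rw [hbadd, hbvv, hbvx, csum1, show ((1/2:ℚ)+1/2 = (1:ℚ)) by norm_num]
          exact one1_eq_zero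
        have hvx := hKcase _ hvvx
        right
        calc x = v + (v + x) := by rw [← add_assoc, h2, zero_add]
          _ = v := by rw [hvx, add_zero]
      · exact absurd (hKcase x (by rw [hcv x, h, redmap_coe]; exact one1_eq_zero)) hx0
      · exact Or.inr (huniq x h)
    set f : G → ZMod 2 := fun x => if b v x = 0 then 0 else 1 with hfdef
    have hfadd : ∀ x y : G, f (x + y) = f x + f y := by
      intro x y
      simp only [hfdef]
      rcases hbt v x with hx | hx <;> rcases hbt v y with hy | hy
      · have hxy : b v (x + y) = (0 : AddCircle (1:ℚ)) := by
          rw [hbadd, hx, hy, csum1, show ((0:ℚ)+0 = (0:ℚ)) by norm_num]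
          exact ac1_zero
        rw [if_pos hxy, if_pos (hx.trans ac1_zero), if_pos (hy.trans ac1_zero)]
        decide
      · have hxy : b v (x + y) = ((1/2:ℚ) : AddCircle (1:ℚ)) := by
          rw [hbadd, hx, hy, csum1]
          exact congrArg _ (by norm_num)
        rw [if_neg (fun h => half1_ne_zero (hxy.symm.trans h)),
          if_pos (hx.trans ac1_zero), if_neg (fun h => half1_ne_zero (hy.symm.trans h))]
        decide
      · have hxy : b v (x + y) = ((1/2:ℚ) : AddCircle (1:ℚ)) := by
          rw [hbadd, hx, hy, csum1]
          exact congrArg _ (by norm_num)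
        rw [if_neg (fun h => half1_ne_zero (hxy.symm.trans h)),
          if_neg (fun h => half1_ne_zero (hx.symm.trans h)), if_pos (hy.trans ac1_zero)]
        decide
      · have hxy : b v (x + y) = (0 : AddCircle (1:ℚ)) := by
          rw [hbadd, hx, hy, csum1, show ((1/2:ℚ)+1/2 = (1:ℚ)) by norm_num]
          exact one1_eq_zero
        rw [if_pos hxy, if_neg (fun h => half1_ne_zero (hx.symm.trans h)),
          if_neg (fun h => half1_ne_zero (hy.symm.trans h))]
        decide
    set F : G →+ ZMod 2 := AddMonoidHom.mk' f hfadd with hFdef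
    have hFapp : ∀ x, F x = f x := fun x => rfl
    have hinj : Function.Injective F := by
      intro x y h
      have hxy : x + y = 0 := by
        apply hKcase
        have h1 : f (x + y) = f x + f y := hfadd x y
        have h2' : f x = f y := h
        rw [h2'] at h1
        have h3 : f (x + y) = 0 := by
          rw [h1]
          rcases zmod2_cases (f y) with h'|h' <;> rw [h'] <;> decide
        simp only [hfdef] at h3
        by_contra hb
        rw [if_neg hb] at h3
        exact one_ne_zero h3
      calc x = x + (y + y) := by rw [h2, add_zero]
        _ = (x + y) + y := (add_assoc _ _ _).symm
        _ = y := by rw [hxy, zero_add]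
    have hsurj : Function.Surjective F := by
      intro t
      rcases zmod2_cases t with h|h
      · exact ⟨0, by rw [map_zero, h]⟩
      · refine ⟨v, ?_⟩
        rw [hFapp, h]
        simp only [hfdef]
        rw [if_neg (fun hh => half1_ne_zero (hbvv.symm.trans hh))]
    set e := AddEquiv.ofBijective F ⟨hinj, hsurj⟩ with hedef
    apply hne
    refine ⟨e, ?_⟩
    intro x
    have heapp : ∀ z : G, e z = f z := fun z => rfl
    rcases hGel x with h | h
    · rw [h, map_zero, if_pos rfl, hq0]
      exact ac2_zero.symm
    · have hev : e x = 1 := by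
        rw [h, heapp]
        simp only [hfdef]
        rw [if_neg (fun hh => half1_ne_zero (hbvv.symm.trans hh))]
      rw [hev, if_neg (by decide : ¬(1:ZMod 2) = 0), h, hv, neg_half2]
  · -- |K| ≥ 2
    push_neg at hKcase
    obtain ⟨y, hyK, hy0⟩ := hKcase
    have hqy := hKval y hyK hy0
    have hbyy : b y y = 0 := hbxx0 y (Or.inr hqy)
    by_cases hzex : ∃ z : G, b v z = 0 ∧ z ≠ 0 ∧ z ≠ y
    · obtain ⟨z, hzK, hz0, hzy⟩ := hzex
      have hqz := hKval z hzK hz0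
      have hbzz : b z z = 0 := hbxx0 z (Or.inr hqz)
      have hbyz : b y z = ((1/2:ℚ) : AddCircle (1:ℚ)) :=
        hKb y z hyK hzK hy0 hz0 (fun h => hzy h.symm)
      have hyz0 : y + z ≠ 0 := by
        intro hh
        apply hzy
        calc z = z + (y + y) := by rw [h2, add_zero]
          _ = (y + z) + y := by rw [add_comm y z, add_assoc]
          _ = y := by rw [hh, zero_add]
      have hyzK : b v (y + z) = 0 := by rw [hbadd, hyK, hzK, add_zero]
      have hKlist : ∀ u : G, b v u = 0 → u = 0 ∨ u = y ∨ u = z ∨ u = y + z := by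
        intro u huK
        by_cases hu0 : u = 0
        · exact Or.inl hu0
        by_cases huy : u = y
        · exact Or.inr (Or.inl huy)
        by_cases huz : u = z
        · exact Or.inr (Or.inr (Or.inl huz))
        by_cases huyz : u = y + z
        · exact Or.inr (Or.inr (Or.inr huyz))
        exfalso
        have h1 : b u y = ((1/2:ℚ) : AddCircle (1:ℚ)) := hKb u y huK hyK hu0 hy0 huy
        have h2' : b u z = ((1/2:ℚ) : AddCircle (1:ℚ)) := hKb u z huK hzK hu0 hz0 huz
        have h3 : b u (y + z) = ((1/2:ℚ) : AddCircle (1:ℚ)) :=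
          hKb u (y+z) huK hyzK hu0 hyz0 huyz
        rw [hbadd, h1, h2', csum1] at h3
        exact half1_ne_zero
          ((h3.symm.trans (congrArg _ (by norm_num : (1/2+1/2:ℚ) = 1))).trans one1_eq_zero)
      have hqvy : q (v + y) = ((1/2:ℚ) : AddCircle (2:ℚ)) := by
        have hq' := hq1 v y
        rw [hv, hqy, hyK, map_zero, add_zero, csum2] at hq'
        exact hq'.trans (ac2_eq 1 (by norm_num))
      have hqvz : q (v + z) = ((1/2:ℚ) : AddCircle (2:ℚ)) := by
        have hq' := hq1 v z
        rw [hv, hqz, hzK, map_zero, add_zero, csum2] at hq'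
        exact hq'.trans (ac2_eq 1 (by norm_num))
      have hqvyz : q (v + (y + z)) = ((1/2:ℚ) : AddCircle (2:ℚ)) := by
        have hq12 := hKval _ hyzK hyz0
        have hq' := hq1 v (y + z)
        rw [hv, hq12, hyzK, map_zero, add_zero, csum2] at hq'
        exact hq'.trans (ac2_eq 1 (by norm_num))
      have e01 : b (v + y) (v + z) = 0 := by
        rw [hbil, hbadd v v z, hbadd y v z, hbvv, hzK, hsym y v, hyK, hbyz]
        simp only [add_zero, zero_add]
        rw [csum1, show ((1/2:ℚ)+1/2 = (1:ℚ)) by norm_num]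
        exact one1_eq_zero
      have e02 : b (v + y) (v + (y + z)) = 0 := by
        rw [hbil, hbadd v v (y+z), hbadd y v (y+z), hbvv, hyzK, hsym y v, hyK, hbadd y y z, hbyy, hbyz]
        simp only [add_zero, zero_add]
        rw [csum1, show ((1/2:ℚ)+1/2 = (1:ℚ)) by norm_num]
        exact one1_eq_zero
      have e12 : b (v + z) (v + (y + z)) = 0 := by
        rw [hbil, hbadd v v (y+z), hbadd z v (y+z), hbvv, hyzK, hsym z v, hzK, hbadd z y z, hsym z y, hbyz, hbzz]
        simp only [add_zero, zero_add]
        rw [csum1, show ((1/2:ℚ)+1/2 = (1:ℚ)) by norm_num]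
        exact one1_eq_zero
      have hspan3 : ∀ x : G, b (v + y) x = 0 → b (v + z) x = 0 → b (v + (y + z)) x = 0 →
          x = 0 := by
        intro x hA hB hC
        rw [hbil] at hA hB hC
        rw [hbil] at hC
        have hr : b y x = 0 := by
          have hh : b y x = (b v x + (b y x + b z x)) + -(b v x + b z x) := by abel
          rw [hC, hB] at hh
          simpa using hh
        have hs : b z x = 0 := by
          have hh : b z x = (b v x + (b y x + b z x)) + -(b v x + b y x) := by abel
          rw [hC, hA] at hh
          simpa using hh
        have hp : b v x = 0 := by
          have hh : b v x = (b v x + b y x) + -(b y x) := by abel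
          rw [hA, hr] at hh
          simpa using hh
        refine hnd x ?_
        intro w
        rcases hbt v w with hw | hw
        · rcases hKlist w (hw.trans ac1_zero) with rfl|rfl|rfl|rfl
          · exact hb0' x
          · rw [hsym]; exact hr
          · rw [hsym]; exact hs
          · rw [hsym, hbil, hr, hs, add_zero]
        · have hwv : b v (w + v) = 0 := by
            rw [hbadd, hw, hbvv, csum1, show ((1/2:ℚ)+1/2 = (1:ℚ)) by norm_num]
            exact one1_eq_zero
          have hw' : w = v + (w + v) := by
            calc w = w + (v + v) := by rw [h2, add_zero]
              _ = (w + v) + v := (add_assoc _ _ _).symm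
              _ = v + (w + v) := add_comm _ _
          rcases hKlist (w + v) hwv with h'|h'|h'|h'
          · rw [hw', h', add_zero, hsym]
            exact hp
          · rw [hw', h', hbadd, hsym x v, hsym x y, hp, hr, add_zero]
          · rw [hw', h', hbadd, hsym x v, hsym x z, hp, hs, add_zero]
          · rw [hw', h', hbadd, hbadd, hsym x v, hsym x y, hsym x z, hp, hr, hs]
            simp
      obtain ⟨e, he⟩ := buildIso h2 b hbil hsym q hq1 hq0 ![v + y, v + z, v + (y + z)]
        (by
          intro i j hij
          fin_cases i <;> fin_cases j
          · exact absurd rfl hij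
          · exact e01
          · exact e02
          · show b (v + z) (v + y) = 0
            rw [hsym]; exact e01
          · exact absurd rfl hij
          · exact e12
          · show b (v + (y + z)) (v + y) = 0
            rw [hsym]; exact e02
          · show b (v + (y + z)) (v + z) = 0
            rw [hsym]; exact e12
          · exact absurd rfl hij)
        (by
          intro i
          fin_cases i
          · exact hqvy
          · exact hqvz
          · exact hqvyz)
        (fun x hx => hspan3 x (hx 0) (hx 1) (hx 2))
      exact hnotstd ⟨3, le_refl 3, e, he⟩
    · -- K = {0, y} : impossible
      push_neg at hzex
      have hwex : ∃ w : G, b y w ≠ 0 := by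
        by_contra hw; push_neg at hw; exact hy0 (hnd y hw)
      obtain ⟨w₀, hw₀⟩ := hwex
      have hw₀' : b y w₀ = ((1/2:ℚ) : AddCircle (1:ℚ)) :=
        (hbt y w₀).resolve_left (fun hh => hw₀ (hh.trans ac1_zero))
      rcases hbt v w₀ with hvw | hvw
      · have hKw := hvw.trans ac1_zero
        by_cases hw0 : w₀ = 0
        · rw [hw0] at hw₀
          exact hw₀ (hb0' y)
        · have hwy := hzex w₀ hKw hw0
          rw [hwy] at hw₀
          exact hw₀ hbyy
      · have hKw : b v (w₀ + v) = 0 := by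
          rw [hbadd, hvw, hbvv, csum1, show ((1/2:ℚ)+1/2 = (1:ℚ)) by norm_num]
          exact one1_eq_zero
        have hyw : b y (w₀ + v) = ((1/2:ℚ) : AddCircle (1:ℚ)) := by
          rw [hbadd, hw₀', hsym y v, hyK, add_zero]
        by_cases hw0 : w₀ + v = 0
        · rw [hw0] at hyw
          exact half1_ne_zero (hyw.symm.trans (hb0' y))
        · have hwy := hzex _ hKw hw0
          rw [hwy] at hyw
          exact half1_ne_zero (hyw.symm.trans hbyy)
end
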